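/- arXiv:2505.11301 — 3 statements merged into one kernel-verified Lean document; each statement's English description precedes it below -/
import Mathlib

section
/- Let n be odd, and let f(x) = x^{n+1} + b_1 x^n + ⋯ + b_n x + b_{n+1} be a monic polynomial with coefficients in a field of characteristic 0. Then the characteristic polynomial of the (n+1)×(n+1) matrix B(b_1,…,b_{n+1}) defined below equals f(x). -/
open Polynomial

/-- The matrix `B(b₁, …, b_{n+1})`: it has `1`'s on the superdiagonal and, for
each `1 ≤ k ≤ n+1`, the coefficient `-b_k` is distributed on the `k`-th lower
diagonal (entries `(i,j)` with `i - j = k - 1`, `1`-indexed), near the main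
antidiagonal: as a single entry `-b_k` if it occupies one position and as two
halves `-b_k/2` if it occupies two positions; all other entries are `0`.
(Indices below are `0`-based; `d = i - j` and the `1`-indexed column is `j+1`.) -/
def companionStyleMatrix {K : Type*} [Field K] (n : ℕ) (b : ℕ → K) :
    Matrix (Fin (n + 1)) (Fin (n + 1)) K :=
  fun i j =>
    if (j : ℕ) = (i : ℕ) + 1 then 1
    else if (j : ℕ) ≤ (i : ℕ) then
      let d := (i : ℕ) - (j : ℕ)
      if (d + 1) % 2 = 1 then
        -- k = d + 1 odd: single entry -b_k
        (if 2 * ((j : ℕ) + 1) = n + 1 - d then -b (d + 1) else 0)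
      else if d = n then
        -- bottom-left corner: -b_{n+1}
        -b (n + 1)
      else
        -- k = d + 1 even, k ≠ n+1: two halves -b_k/2
        (if 2 * ((j : ℕ) + 1) = n - d ∨ 2 * ((j : ℕ) + 1) = n + 2 - d
          then -b (d + 1) / 2 else 0)
    else 0

open Matrix

namespace CSMAux

variable {K : Type*} [Field K] (n : ℕ) (b : ℕ → K)

/-- Coefficient of `X^(m-k)` in the auxiliary polynomial `p m`. -/
def c (m k : ℕ) : K :=
  if k = 0 then 1
  else if n < 2 * m then
    (if k ≤ 2 * m - n then b k
     else if k = 2 * m - n + 1 then b k / 2 else 0)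
  else 0

/-- The auxiliary polynomials (the characteristic polynomials of the leading
principal submatrices, given here directly in closed form). -/
noncomputable def p (m : ℕ) : K[X] :=
  ∑ k ∈ Finset.range (m + 1), C (c n b m k) * X ^ (m - k)

lemma p_eq_pow {m : ℕ} (hm : 2 * m ≤ n) : p n b m = X ^ m := by
  unfold p
  rw [Finset.sum_eq_single 0]
  · simp [c]
  · intro k hk hne
    have hc : c n b m k = 0 := by
      unfold c
      rw [if_neg hne, if_neg (by omega)]
    rw [hc]
    simp
  · intro h
    exact absurd (Finset.mem_range.mpr (by omega)) h

lemma p_zero : p n b 0 = 1 := by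
  rw [p_eq_pow n b (by omega), pow_zero]

variable [CharZero K]

set_option maxHeartbeats 4000000 in
/-- The coefficient-level form of the key recursion. -/
lemma c_succ {m k : ℕ} (hn : Odd n) (hm : m ≤ n) (hk : k ≤ m + 1) :
    c n b (m + 1) k
      = (if k ≤ m then c n b m k else 0)
        + (if n < 2 * m ∧ k = 2 * m + 1 - n then
            (if m = n then b (n + 1) else b (2 * m + 1 - n) / 2) else 0)
        + (if (n ≤ 2 * m + 1 ∧ m < n) ∧ k = 2 * m + 2 - n then b (2 * m + 2 - n) else 0)
        + (if (n ≤ 2 * m + 1 ∧ m + 2 ≤ n) ∧ k = 2 * m + 3 - n then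
            b (2 * m + 3 - n) / 2 else 0) := by
  obtain ⟨u, hu⟩ := hn
  unfold c
  split_ifs <;>
    first
      | omega
      | ring1
      | (rw [show 2 * m + 1 - n = k from by omega]; ring1)
      | (rw [show 2 * m + 2 - n = k from by omega]; ring1)
      | (rw [show 2 * m + 3 - n = k from by omega]; ring1)
      | (rw [show n + 1 = k from by omega]; ring1)

/-- The key polynomial recursion, in closed form. -/
lemma p_succ (hn : Odd n) {m : ℕ} (hm : m ≤ n) :
    p n b (m + 1) = p n b m * X
      + (if n < 2 * m then
          C (if m = n then b (n + 1) else b (2 * m + 1 - n) / 2) * X ^ (n - m) else 0)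
      + (if n ≤ 2 * m + 1 ∧ m < n then C (b (2 * m + 2 - n)) * X ^ (n - 1 - m) else 0)
      + (if n ≤ 2 * m + 1 ∧ m + 2 ≤ n then C (b (2 * m + 3 - n) / 2) * X ^ (n - 2 - m) else 0)
      := by
  have hsum1 : p n b m * X
      = ∑ k ∈ Finset.range (m + 2), C (if k ≤ m then c n b m k else 0) * X ^ (m + 1 - k) := by
    rw [p, Finset.sum_mul,
      Finset.sum_range_succ (fun k => C (if k ≤ m then c n b m k else 0) * X ^ (m + 1 - k))]
    rw [if_neg (by omega), map_zero, zero_mul, add_zero]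
    refine Finset.sum_congr rfl fun k hk => ?_
    rw [Finset.mem_range] at hk
    rw [if_pos (by omega), mul_assoc, ← pow_succ,
      show m - k + 1 = m + 1 - k from by omega]
  have hsum2 : ∀ (cond : Prop) [Decidable cond] (v : K) (KK : ℕ), (cond → KK ≤ m + 1) →
      ((if cond then C v * X ^ (m + 1 - KK) else 0) : K[X])
        = ∑ k ∈ Finset.range (m + 2), C (if cond ∧ k = KK then v else 0) * X ^ (m + 1 - k) := by
    intro cond _ v KK hKK
    by_cases h : cond
    · rw [if_pos h, Finset.sum_eq_single KK]
      · rw [if_pos ⟨h, rfl⟩]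
      · intro k hk hne
        rw [if_neg (fun hc => hne hc.2), map_zero, zero_mul]
      · intro hKK'
        have := hKK h
        exact absurd (Finset.mem_range.mpr (by omega)) hKK'
    · rw [if_neg h]
      symm
      apply Finset.sum_eq_zero
      intro k hk
      rw [if_neg (fun hc => h hc.1), map_zero, zero_mul]
  have e1 : n < 2 * m → n - m = m + 1 - (2 * m + 1 - n) := by omega
  have e2 : n ≤ 2 * m + 1 ∧ m < n → n - 1 - m = m + 1 - (2 * m + 2 - n) := by omega
  have e3 : n ≤ 2 * m + 1 ∧ m + 2 ≤ n → n - 2 - m = m + 1 - (2 * m + 3 - n) := by omega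
  have g1 : (if n < 2 * m then
        C (if m = n then b (n + 1) else b (2 * m + 1 - n) / 2) * X ^ (n - m) else 0)
      = ∑ k ∈ Finset.range (m + 2),
        C (if n < 2 * m ∧ k = 2 * m + 1 - n then
            (if m = n then b (n + 1) else b (2 * m + 1 - n) / 2) else 0) * X ^ (m + 1 - k) := by
    rw [← hsum2 _ _ (2 * m + 1 - n) (by omega)]
    by_cases h : n < 2 * m
    · rw [if_pos h, if_pos h, e1 h]
    · rw [if_neg h, if_neg h]
  have g2 : (if n ≤ 2 * m + 1 ∧ m < n then C (b (2 * m + 2 - n)) * X ^ (n - 1 - m) else 0)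
      = ∑ k ∈ Finset.range (m + 2),
        C (if (n ≤ 2 * m + 1 ∧ m < n) ∧ k = 2 * m + 2 - n then b (2 * m + 2 - n) else 0)
          * X ^ (m + 1 - k) := by
    rw [← hsum2 _ _ (2 * m + 2 - n) (by omega)]
    by_cases h : n ≤ 2 * m + 1 ∧ m < n
    · rw [if_pos h, if_pos h, e2 h]
    · rw [if_neg h, if_neg h]
  have g3 : (if n ≤ 2 * m + 1 ∧ m + 2 ≤ n then
        C (b (2 * m + 3 - n) / 2) * X ^ (n - 2 - m) else 0)
      = ∑ k ∈ Finset.range (m + 2),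
        C (if (n ≤ 2 * m + 1 ∧ m + 2 ≤ n) ∧ k = 2 * m + 3 - n then
            b (2 * m + 3 - n) / 2 else 0) * X ^ (m + 1 - k) := by
    rw [← hsum2 _ _ (2 * m + 3 - n) (by omega)]
    by_cases h : n ≤ 2 * m + 1 ∧ m + 2 ≤ n
    · rw [if_pos h, if_pos h, e3 h]
    · rw [if_neg h, if_neg h]
  rw [hsum1, g1, g2, g3, ← Finset.sum_add_distrib, ← Finset.sum_add_distrib,
    ← Finset.sum_add_distrib, p]
  refine Finset.sum_congr rfl fun k hk => ?_
  rw [Finset.mem_range] at hk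
  rw [c_succ n b hn hm (by omega), map_add, map_add, map_add]
  ring

end CSMAux

section MainSection

variable {K : Type*} [Field K] [CharZero K] {n : ℕ} (b : ℕ → K)

open CSMAux

set_option maxHeartbeats 4000000 in
/-- Row `m` of the matrix, in the form needed for the recursion. -/
lemma csm_row_eq (hn : Odd n) {m : ℕ} (hm : m ≤ n) (j : Fin (n + 1)) :
    companionStyleMatrix n b ⟨m, by omega⟩ j
      = (if (j : ℕ) = m + 1 then 1 else 0)
        - (if n < 2 * m ∧ (j : ℕ) = n - m then
            (if m = n then b (n + 1) else b (2 * m + 1 - n) / 2) else 0)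
        - (if (n ≤ 2 * m + 1 ∧ m < n) ∧ (j : ℕ) = n - 1 - m then b (2 * m + 2 - n) else 0)
        - (if (n ≤ 2 * m + 1 ∧ m + 2 ≤ n) ∧ (j : ℕ) = n - 2 - m then b (2 * m + 3 - n) / 2
            else 0) := by
  obtain ⟨u, hu⟩ := hn
  have hj : (j : ℕ) < n + 1 := j.isLt
  unfold companionStyleMatrix
  dsimp only
  split_ifs <;>
    first
      | omega
      | ring1
      | (rw [show 2 * m + 1 - n = m - (j : ℕ) + 1 from by omega]; ring1)
      | (rw [show 2 * m + 2 - n = m - (j : ℕ) + 1 from by omega]; ring1)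
      | (rw [show 2 * m + 3 - n = m - (j : ℕ) + 1 from by omega]; ring1)
      | (rw [show n + 1 = m - (j : ℕ) + 1 from by omega]; ring1)

/-- The matrix vanishes above the superdiagonal. -/
lemma csm_upper_eq_zero {i j : Fin (n + 1)} (h : (i : ℕ) + 1 < (j : ℕ)) :
    companionStyleMatrix n b i j = 0 := by
  unfold companionStyleMatrix
  dsimp only
  split_ifs <;> first | rfl | omega

lemma csm_superdiag {i j : Fin (n + 1)} (h : (j : ℕ) = (i : ℕ) + 1) :
    companionStyleMatrix n b i j = 1 := by
  unfold companionStyleMatrix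
  rw [if_pos h]

lemma vecMul_apply {N : Type*} [Fintype N] (v : N → K) (M : Matrix N N K) (j : N) :
    (v ᵥ* M) j = ∑ i, v i * M i j := rfl

lemma vecMul_smul_matrix {N : Type*} [Fintype N] (v : N → K) (a : K) (M : Matrix N N K) :
    v ᵥ* (a • M) = a • (v ᵥ* M) := by
  ext j
  simp only [Matrix.vecMul, dotProduct, Matrix.smul_apply, Pi.smul_apply,
    smul_eq_mul, Finset.mul_sum]
  exact Finset.sum_congr rfl fun i _ => by ring

lemma vecMul_finsetSum {N ι : Type*} [Fintype N] (s : Finset ι) (v : N → K)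
    (M : ι → Matrix N N K) :
    v ᵥ* (∑ i ∈ s, M i) = ∑ i ∈ s, v ᵥ* M i := by
  ext j
  simp only [Matrix.vecMul, dotProduct, Finset.sum_apply, Matrix.sum_apply,
    Finset.mul_sum]
  exact Finset.sum_comm

/-- The key vector computation: applying `p m` of the matrix to the first
standard basis (row) vector yields the `m`-th standard basis vector. -/
lemma main_vec (hn : Odd n) : ∀ m, m ≤ n + 1 →
    Pi.single (0 : Fin (n + 1)) (1 : K) ᵥ* (aeval (companionStyleMatrix n b) (p n b m))
      = fun j : Fin (n + 1) => if (j : ℕ) = m then (1 : K) else 0 := by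
  intro m
  induction m using Nat.strong_induction_on with
  | _ m IH =>
    intro hm
    set B := companionStyleMatrix n b with hB
    match m, hm with
    | 0, _ =>
      rw [p_zero, _root_.map_one, Matrix.vecMul_one]
      funext j
      rw [Pi.single_apply]
      by_cases h : (j : ℕ) = 0
      · rw [if_pos (Fin.ext h), if_pos h]
      · rw [if_neg (fun hh => h (by rw [hh]; rfl)), if_neg h]
    | (m + 1), hm =>
      have hm' : m ≤ n := by omega
      have hterm : ∀ (cond : Prop) [Decidable cond] (v : K) (d : ℕ),
          (cond → 2 * d ≤ n) → (cond → d ≤ m) →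
          Pi.single (0 : Fin (n + 1)) (1 : K) ᵥ*
              (aeval B (if cond then C v * X ^ d else 0))
            = fun j : Fin (n + 1) => if cond ∧ (j : ℕ) = d then v else (0 : K) := by
        intro cond _ v d h2d hdm
        by_cases h : cond
        · rw [if_pos h, _root_.map_mul, aeval_C, aeval_X_pow, ← Algebra.smul_def,
            vecMul_smul_matrix,
            show B ^ d = aeval B (p n b d) from by rw [p_eq_pow n b (h2d h), aeval_X_pow],
            IH d (by have := hdm h; omega) (by have := hdm h; omega)]
          funext j
          rw [Pi.smul_apply, smul_eq_mul]
          by_cases hj : (j : ℕ) = d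
          · rw [if_pos hj, if_pos ⟨h, hj⟩, mul_one]
          · rw [if_neg hj, if_neg (fun hc => hj hc.2), mul_zero]
        · rw [if_neg h, _root_.map_zero, Matrix.vecMul_zero]
          funext j
          rw [if_neg (fun hc => h hc.1)]
          rfl
      rw [p_succ n b hn hm']
      simp only [_root_.map_add, Matrix.vecMul_add]
      rw [_root_.map_mul, aeval_X, ← Matrix.vecMul_vecMul, IH m (by omega) (by omega)]
      have hsingle : (fun j : Fin (n + 1) => if (j : ℕ) = m then (1 : K) else 0)
          = Pi.single (⟨m, by omega⟩ : Fin (n + 1)) 1 := by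
        funext j
        rw [Pi.single_apply]
        by_cases h : (j : ℕ) = m
        · rw [if_pos h, if_pos (Fin.ext h)]
        · rw [if_neg h, if_neg (fun hh => h (by rw [hh]))]
      rw [hsingle, Matrix.single_one_vecMul,
        hterm _ _ (n - m) (fun h => by omega) (fun h => by omega),
        hterm _ _ (n - 1 - m) (fun h => by omega) (fun h => by omega),
        hterm _ _ (n - 2 - m) (fun h => by omega) (fun h => by omega)]
      funext j
      simp only [Pi.add_apply]
      rw [hB, show (companionStyleMatrix n b).row ⟨m, by omega⟩ j
          = companionStyleMatrix n b ⟨m, by omega⟩ j from rfl, csm_row_eq b hn hm' j]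
      ring

/-- Rows of powers: `e₀ Bᵏ` vanishes above coordinate `k` and has a `1` there. -/
lemma pow_vec (hn : Odd n) : ∀ k, ∀ _ : k ≤ n,
    (∀ j : Fin (n + 1), (k : ℕ) < (j : ℕ) →
      (Pi.single (0 : Fin (n + 1)) (1 : K) ᵥ* (companionStyleMatrix n b) ^ k) j = 0)
    ∧ (Pi.single (0 : Fin (n + 1)) (1 : K) ᵥ* (companionStyleMatrix n b) ^ k)
        ⟨k, by omega⟩ = 1 := by
  intro k
  induction k with
  | zero =>
    intro _
    constructor
    · intro j hj
      rw [pow_zero, Matrix.vecMul_one, Pi.single_apply,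
        if_neg (fun hh => by rw [hh] at hj; simp at hj)]
    · rw [pow_zero, Matrix.vecMul_one, Pi.single_apply]
      simp [Fin.ext_iff]
  | succ k IHk =>
    intro hk
    obtain ⟨IH0, IH1⟩ := IHk (by omega)
    have hstep : Pi.single (0 : Fin (n + 1)) (1 : K) ᵥ* (companionStyleMatrix n b) ^ (k + 1)
        = (Pi.single (0 : Fin (n + 1)) (1 : K) ᵥ* (companionStyleMatrix n b) ^ k)
            ᵥ* companionStyleMatrix n b := by
      rw [pow_succ, Matrix.vecMul_vecMul]
    constructor
    · intro j hj
      rw [hstep, _root_.vecMul_apply]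
      apply Finset.sum_eq_zero
      intro i _
      by_cases hik : k < (i : ℕ)
      · rw [IH0 i hik, zero_mul]
      · rw [csm_upper_eq_zero b (by omega), mul_zero]
    · rw [hstep, _root_.vecMul_apply]
      rw [Finset.sum_eq_single (⟨k, by omega⟩ : Fin (n + 1))]
      · rw [IH1, csm_superdiag b rfl, one_mul]
      · intro i _ hne
        by_cases hik : k < (i : ℕ)
        · rw [IH0 i hik, zero_mul]
        · have hlt : (i : ℕ) < k := by
            rcases Nat.lt_or_ge (i : ℕ) k with h | h
            · exact h
            · exact absurd (Fin.ext (show (i : ℕ) = k by omega)) hne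
          rw [csm_upper_eq_zero b (show (i : ℕ) + 1 < k + 1 by omega), mul_zero]
      · intro h
        exact absurd (Finset.mem_univ _) h

/-- The target polynomial is `p (n+1)`. -/
lemma target_eq_p :
    (X ^ (n + 1) + ∑ k ∈ Finset.range (n + 1), C (b (k + 1)) * X ^ (n - k) : K[X])
      = p n b (n + 1) := by
  rw [p, Finset.sum_range_succ' (fun k => C (c n b (n + 1) k) * X ^ (n + 1 - k))]
  have h0 : C (c n b (n + 1) 0) * X ^ (n + 1 - 0) = X ^ (n + 1) := by
    rw [show c n b (n + 1) 0 = 1 from by rw [c, if_pos rfl]]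
    simp
  rw [h0, add_comm]
  congr 1
  refine Finset.sum_congr rfl fun k hk => ?_
  rw [Finset.mem_range] at hk
  have hc : c n b (n + 1) (k + 1) = b (k + 1) := by
    rw [c, if_neg (by omega), if_pos (by omega), if_pos (by omega)]
  rw [hc, show n + 1 - (k + 1) = n - k from by omega]

end MainSection

/-- For `n` odd and `f(x) = x^{n+1} + b₁ x^n + ⋯ + b_n x + b_{n+1}` monic with
coefficients in a field of characteristic zero, the characteristic polynomial
of the `(n+1) × (n+1)` matrix `B(b₁, …, b_{n+1})` equals `f`. -/
theorem charpoly_companionStyleMatrix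
    (K : Type*) [Field K] [CharZero K] (n : ℕ) (hn : Odd n) (b : ℕ → K) :
    (companionStyleMatrix n b).charpoly =
      X ^ (n + 1) + ∑ k ∈ Finset.range (n + 1), C (b (k + 1)) * X ^ (n - k) := by
  classical
  set B := companionStyleMatrix n b with hB
  set f : K[X] := X ^ (n + 1) + ∑ k ∈ Finset.range (n + 1), C (b (k + 1)) * X ^ (n - k)
    with hf
  have hsdeg : (∑ k ∈ Finset.range (n + 1), C (b (k + 1)) * X ^ (n - k) : K[X]).degree
      < ((n + 1 : ℕ) : WithBot ℕ) := by
    refine lt_of_le_of_lt (Polynomial.degree_sum_le _ _) ?_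
    rw [Finset.sup_lt_iff (by exact_mod_cast WithBot.bot_lt_coe _)]
    intro k hk
    rw [Finset.mem_range] at hk
    refine lt_of_le_of_lt (Polynomial.degree_C_mul_X_pow_le _ _) ?_
    exact_mod_cast Nat.lt_succ_of_le (Nat.sub_le n k)
  have hfmonic : f.Monic := by
    rw [hf]
    exact Polynomial.monic_X_pow_add hsdeg
  have hfdeg : f.degree = ((n + 1 : ℕ) : WithBot ℕ) := by
    rw [hf, Polynomial.degree_add_eq_left_of_degree_lt (by rw [Polynomial.degree_X_pow]; exact hsdeg),
      Polynomial.degree_X_pow]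
  have hcmonic : B.charpoly.Monic := B.charpoly_monic
  have hcdeg : B.charpoly.degree = ((n + 1 : ℕ) : WithBot ℕ) := by
    rw [Polynomial.degree_eq_natDegree hcmonic.ne_zero, Matrix.charpoly_natDegree_eq_dim]
    simp
  by_contra hne
  set g : K[X] := B.charpoly - f with hg
  have hgne : g ≠ 0 := sub_ne_zero.mpr hne
  have hgdeg : g.natDegree ≤ n := by
    have hlt : g.degree < ((n + 1 : ℕ) : WithBot ℕ) := by
      rw [hg, ← hcdeg]
      exact Polynomial.degree_sub_lt (by rw [hcdeg, hfdeg]) hcmonic.ne_zero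
        (by rw [hcmonic.leadingCoeff, hfmonic.leadingCoeff])
    have := (Polynomial.natDegree_lt_iff_degree_lt hgne).mpr hlt
    omega
  have hvan : Pi.single (0 : Fin (n + 1)) (1 : K) ᵥ* (aeval B g) = 0 := by
    rw [hg, _root_.map_sub, Matrix.aeval_self_charpoly, zero_sub, Matrix.vecMul_neg]
    rw [hf, target_eq_p, main_vec b hn (n + 1) le_rfl]
    funext j
    have : (j : ℕ) ≠ n + 1 := by omega
    simp [this]
  have hcoord : (Pi.single (0 : Fin (n + 1)) (1 : K) ᵥ* (aeval B g)) ⟨g.natDegree, by omega⟩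
      = g.coeff g.natDegree := by
    rw [Polynomial.aeval_eq_sum_range, vecMul_finsetSum]
    rw [Finset.sum_apply]
    rw [Finset.sum_eq_single g.natDegree]
    · rw [vecMul_smul_matrix, Pi.smul_apply,
        (pow_vec b hn g.natDegree (by omega)).2, smul_eq_mul, mul_one]
    · intro i hi hne'
      rw [Finset.mem_range] at hi
      rw [vecMul_smul_matrix, Pi.smul_apply,
        (pow_vec b hn i (by omega)).1 ⟨g.natDegree, by omega⟩
          (show (i : ℕ) < g.natDegree by omega),
        smul_eq_mul, mul_zero]
    · intro h
      exact absurd (Finset.mem_range.mpr (by omega)) h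
  rw [hvan] at hcoord
  exact hgne (Polynomial.leadingCoeff_eq_zero.mp
    (by rw [Polynomial.leadingCoeff, ← hcoord]; rfl))
end

section
/- Let G be a locally compact, second countable Hausdorff topological group, Γ a discrete subgroup, and let S_1, S_2 be Borel subsets of G such that the quotient map restricted to S_1 is injective into Γ\G and the quotient map restricted to S_2 is surjective onto Γ\G. Then there exists a Borel set F with S_1 ⊆ F ⊆ S_1 ∪ S_2 such that the quotient map restricted to F is a bijection onto Γ\G. -/
open scoped Pointwise


/-- Let `G` be a locally compact, second countable Hausdorff topological group,
`Γ` a discrete subgroup, and `S₁, S₂` Borel subsets of `G` such that the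
quotient map `G → Γ\G` is injective on `S₁` and surjective from `S₂`.  Then
there is a Borel set `F` with `S₁ ⊆ F ⊆ S₁ ∪ S₂` mapping bijectively onto
`Γ\G`: every left `Γ`-orbit meets `F` exactly once. -/

theorem exists_borel_fundamental_domain_between
    (G : Type*) [Group G] [TopologicalSpace G] [IsTopologicalGroup G]
    [LocallyCompactSpace G] [SecondCountableTopology G] [T2Space G]
    [MeasurableSpace G] [BorelSpace G]
    (Γ : Subgroup G) [DiscreteTopology Γ]
    (S₁ S₂ : Set G) (hS₁m : MeasurableSet S₁) (hS₂m : MeasurableSet S₂)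
    (hinj : ∀ x ∈ S₁, ∀ y ∈ S₁, (∃ γ ∈ Γ, γ * x = y) → x = y)
    (hsurj : ∀ g : G, ∃ γ ∈ Γ, ∃ s ∈ S₂, γ * s = g) :
    ∃ F : Set G, MeasurableSet F ∧ S₁ ⊆ F ∧ F ⊆ S₁ ∪ S₂ ∧
      (∀ g : G, ∃ γ ∈ Γ, ∃ f ∈ F, γ * f = g) ∧
      (∀ f₁ ∈ F, ∀ f₂ ∈ F, (∃ γ ∈ Γ, γ * f₁ = f₂) → f₁ = f₂) := by
  -- Γ is countable
  have hΓc : Countable Γ := TopologicalSpace.separableSpace_iff_countable.mp inferInstance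
  -- an open neighborhood V of 1 meeting Γ only in 1
  obtain ⟨V, hVopen, hV1⟩ : ∃ V : Set G, IsOpen V ∧ ((↑) : Γ → G) ⁻¹' V = {1} := by
    have : IsOpen ({1} : Set Γ) := isOpen_discrete _
    rw [isOpen_induced_iff] at this
    obtain ⟨V, hVo, hVp⟩ := this
    exact ⟨V, hVo, hVp⟩
  have hV1mem : (1 : G) ∈ V := by
    have : (1 : Γ) ∈ (((↑) : Γ → G) ⁻¹' V) := by rw [hV1]; rfl
    exact this
  have hVΓ : ∀ γ : G, γ ∈ Γ → γ ∈ V → γ = 1 := by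
    intro γ hγ hγV
    have : (⟨γ, hγ⟩ : Γ) ∈ (((↑) : Γ → G) ⁻¹' V) := hγV
    rw [hV1] at this
    exact congrArg Subtype.val this
  -- shrink: open U ∋ 1 with U * U⁻¹ ⊆ V (via division)
  obtain ⟨V', hV'mem, hV'div⟩ := exists_nhds_split_inv (hVopen.mem_nhds hV1mem)
  obtain ⟨U, hUV', hUopen, hU1⟩ := mem_nhds_iff.mp hV'mem
  have hUdiv : ∀ u ∈ U, ∀ w ∈ U, u / w ∈ V := fun u hu w hw => hV'div u (hUV' hu) w (hUV' hw)
  -- countable cover of G by right translates of U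
  obtain ⟨t, htc, htU⟩ := TopologicalSpace.countable_cover_nhds
    (f := fun x => U * ({x} : Set G))
    (fun x => (hUopen.mul_right).mem_nhds ⟨1, hU1, x, rfl, one_mul x⟩)
  have htne : t.Nonempty := by
    rcases Set.eq_empty_or_nonempty t with h | h
    · exfalso
      have : (1 : G) ∈ ⋃ x ∈ t, U * ({x} : Set G) := htU ▸ Set.mem_univ 1
      simp [h] at this
    · exact h
  obtain ⟨c, hc⟩ := Set.Countable.exists_eq_range htc htne
  -- the pieces
  set ΓS₁ : Set G := ⋃ γ : Γ, (γ : G) • S₁ with hΓS₁def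
  set S₃ : Set G := S₂ \ ΓS₁ with hS₃def
  set W : ℕ → Set G := fun n => U * ({c n} : Set G) ∩ S₃ with hWdef
  set F₀ : Set G := ⋃ n, W n \ ⋃ i < n, ⋃ γ : Γ, (γ : G) • W i with hF₀def
  refine ⟨S₁ ∪ F₀, ?_, Set.subset_union_left, ?_, ?_, ?_⟩
  -- measurability
  · have hΓS₁m : MeasurableSet ΓS₁ := MeasurableSet.iUnion fun γ => hS₁m.const_smul _
    have hS₃m : MeasurableSet S₃ := hS₂m.diff hΓS₁m
    have hWm : ∀ n, MeasurableSet (W n) := fun n => (hUopen.mul_right).measurableSet.inter hS₃m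
    exact hS₁m.union <| MeasurableSet.iUnion fun n =>
      (hWm n).diff <| MeasurableSet.iUnion fun i => MeasurableSet.iUnion fun _ =>
        MeasurableSet.iUnion fun γ => (hWm i).const_smul _
  -- F ⊆ S₁ ∪ S₂
  · intro x hx
    rcases hx with hx | hx
    · exact Or.inl hx
    · obtain ⟨n, hn⟩ := Set.mem_iUnion.mp hx
      exact Or.inr hn.1.2.1
  -- surjectivity
  · intro g
    by_cases hg : ∃ δ ∈ Γ, ∃ x ∈ S₁, δ * x = g
    · obtain ⟨δ, hδ, x, hx, hδx⟩ := hg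
      exact ⟨δ, hδ, x, Or.inl hx, hδx⟩
    · -- the orbit of g avoids S₁; find a point of the orbit in S₃
      obtain ⟨γ, hγ, s, hs, hγs⟩ := hsurj g
      have hsS₃ : s ∈ S₃ := by
        refine ⟨hs, ?_⟩
        intro hmem
        obtain ⟨_, ⟨δ, rfl⟩, x, hx, hδx⟩ := hmem
        exact hg ⟨γ * δ, mul_mem hγ δ.2, x, hx, by
          rw [← hγs, ← hδx]; simp [mul_assoc, smul_eq_mul]⟩
      -- s lies in some translate U * {c n}
      have hsmem : s ∈ ⋃ x ∈ t, U * ({x} : Set G) := htU ▸ Set.mem_univ s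
      obtain ⟨x, hxt, hsx⟩ := Set.mem_iUnion₂.mp hsmem
      have : x ∈ Set.range c := hc ▸ hxt
      obtain ⟨n₁, rfl⟩ := this
      -- the set of indices whose piece meets the orbit of g
      have hmeets : ∃ n, ∃ δ ∈ Γ, ∃ y ∈ W n, δ * y = g :=
        ⟨n₁, γ, hγ, s, ⟨hsx, hsS₃⟩, hγs⟩
      classical
      set n₀ := Nat.find hmeets with hn₀def
      obtain ⟨δ, hδ, y, hy, hδy⟩ := Nat.find_spec hmeets
      refine ⟨δ, hδ, y, Or.inr ?_, hδy⟩
      refine Set.mem_iUnion.mpr ⟨n₀, hy, ?_⟩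
      intro hybad
      simp only [Set.mem_iUnion] at hybad
      obtain ⟨i, hi, ε, hz⟩ := hybad
      obtain ⟨z, hzW, hεz⟩ := hz
      -- then z is in the orbit of g and in W i with i < n₀ : contradiction
      have : ∃ δ' ∈ Γ, ∃ y' ∈ W i, δ' * y' = g := by
        refine ⟨δ * ε, mul_mem hδ ε.2, z, hzW, ?_⟩
        rw [← hδy, ← hεz]
        simp [mul_assoc, smul_eq_mul]
      exact Nat.find_min hmeets hi this
  -- injectivity
  · intro f₁ hf₁ f₂ hf₂ ⟨γ, hγ, hγf⟩
    have hΓS₁orbit : ∀ x : G, x ∈ ΓS₁ → ∀ δ : G, δ ∈ Γ → δ * x ∈ ΓS₁ := by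
      intro x hx δ hδ
      obtain ⟨_, ⟨ε, rfl⟩, y, hy, hεy⟩ := hx
      exact ⟨_, ⟨⟨δ, hδ⟩ * ε, rfl⟩, y, hy, by
        rw [← hεy]; simp [mul_assoc, smul_eq_mul]⟩
    have hF₀S₃ : ∀ x ∈ F₀, x ∈ S₃ := by
      intro x hx
      obtain ⟨n, hn⟩ := Set.mem_iUnion.mp hx
      exact hn.1.2
    rcases hf₁ with h1 | h1 <;> rcases hf₂ with h2 | h2
    · exact hinj f₁ h1 f₂ h2 ⟨γ, hγ, hγf⟩
    · -- f₁ ∈ S₁, f₂ ∈ F₀ ⊆ S₃ : but f₂ = γ f₁ ∈ ΓS₁, contradiction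
      exfalso
      have : f₂ ∈ ΓS₁ := ⟨_, ⟨⟨γ, hγ⟩, rfl⟩, f₁, h1, by simp [smul_eq_mul, hγf]⟩
      exact (hF₀S₃ f₂ h2).2 this
    · exfalso
      have hf1 : f₁ ∈ ΓS₁ := ⟨_, ⟨⟨γ, hγ⟩⁻¹, rfl⟩, f₂, h2, by
        simp only [smul_eq_mul, ← hγf]
        simp [← mul_assoc]⟩
      exact (hF₀S₃ f₁ h1).2 hf1
    · -- both in F₀
      obtain ⟨n, hn⟩ := Set.mem_iUnion.mp h1
      obtain ⟨m, hm⟩ := Set.mem_iUnion.mp h2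
      rcases lt_trichotomy n m with hlt | heq | hgt
      · exfalso
        refine hm.2 (Set.mem_iUnion.mpr ⟨n, ?_⟩)
        simp only [Set.mem_iUnion]
        exact ⟨hlt, ⟨γ, hγ⟩, f₁, hn.1, by simp [smul_eq_mul, hγf]⟩
      · subst heq
        -- both in U * {c n}, so γ ∈ U U⁻¹ ⊆ V, hence γ = 1
        obtain ⟨⟨u, hu, x, hx, hux⟩, -⟩ := hn.1
        obtain ⟨⟨u', hu', x', hx', hux'⟩, -⟩ := hm.1
        rcases hx with rfl
        rcases hx' with rfl
        have hkey : γ * (u * c n) = u' * c n := by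
          simp only at hux hux'
          rw [hux, hux', hγf]
        have hγu : γ * u = u' := by
          rw [← mul_assoc] at hkey
          exact mul_right_cancel hkey
        have hγform : γ = u' / u := by rw [← hγu, mul_div_assoc, div_self', mul_one]
        have : γ = 1 := hVΓ γ hγ (hγform ▸ hUdiv u' hu' u hu)
        rw [← hγf, this, one_mul]
      · exfalso
        refine hn.2 (Set.mem_iUnion.mpr ⟨m, ?_⟩)
        simp only [Set.mem_iUnion]
        refine ⟨hgt, ⟨γ, hγ⟩⁻¹, f₂, hm.1, ?_⟩
        simp only [smul_eq_mul, ← hγf]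
        simp [← mul_assoc]
end

section
/- Let F be a number field, O_F its ring of integers, and O_F^× its unit group. Let w_F ⊂ O_F^× be the roots of unity. There exists a compact subset Λ of F_∞^1 (the norm-one hypersurface of F_∞ = ∏_{v|∞} F_v) such that F_∞^1 = Λ · O_F^×, i.e. every element of F_∞^1 can be written as a product of an element of Λ and a unit of O_F. -/
open NumberField

open NumberField.mixedEmbedding NumberField.InfinitePlace
open NumberField.Units.dirichletUnitTheorem Finset

section aux

variable {F : Type*} [Field F] [NumberField F]

omit [NumberField F] in
private lemma continuous_normAtPlace' (w : InfinitePlace F) :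
    Continuous (normAtPlace w : mixedSpace F → ℝ) := by
  by_cases hw : IsReal w
  · simp_rw [funext fun x ↦ normAtPlace_apply_of_isReal hw x]
    fun_prop
  · simp_rw [funext fun x ↦
      normAtPlace_apply_of_isComplex (not_isReal_iff_isComplex.mp hw) x]
    fun_prop

private lemma continuous_mixedNorm :
    Continuous (mixedEmbedding.norm : mixedSpace F → ℝ) := by
  simp_rw [funext fun x : mixedSpace F ↦ mixedEmbedding.norm_apply x]
  exact continuous_finset_prod _ fun w _ ↦ (continuous_normAtPlace' w).pow _

private lemma isBounded_cone_inter :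
    Bornology.IsBounded
      {x : mixedSpace F | x ∈ fundamentalCone F ∧ mixedEmbedding.norm x = 1} := by
  classical
  set B := (Units.basisUnitLattice F).ofZLatticeBasis ℝ _ with hB
  obtain ⟨R₀, hR₀⟩ := isBounded_iff_forall_norm_le.mp
    (ZSpan.fundamentalDomain_isBounded B)
  set R := max R₀ 0 with hRdef
  have hR : ∀ y ∈ ZSpan.fundamentalDomain B, ‖y‖ ≤ R :=
    fun y hy ↦ (hR₀ y hy).trans (le_max_left _ _)
  have hR0 : (0 : ℝ) ≤ R := le_max_right _ _
  set C := ((Fintype.card (InfinitePlace F) : ℝ) + 1) * R with hC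
  rw [isBounded_iff_forall_norm_le]
  refine ⟨Real.exp C, fun x ⟨hx, hx1⟩ ↦ ?_⟩
  set n : InfinitePlace F → ℝ := fun w ↦ normAtPlace w x with hn
  have npos : ∀ w, 0 < n w := fun w ↦ fundamentalCone.normAtPlace_pos_of_mem hx w
  -- bound for places ≠ w₀
  have hlog : ∀ w (h : w ≠ w₀), |(mult w : ℝ) * Real.log (n w)| ≤ R := by
    intro w h
    have h1 : ‖logMap x‖ ≤ R := hR _ hx.1
    have h2 : ‖logMap x ⟨w, h⟩‖ ≤ ‖logMap x‖ := norm_le_pi_norm _ _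
    rw [logMap_apply_of_norm_eq_one hx1, Real.norm_eq_abs] at h2
    exact h2.trans h1
  -- the weighted sum of logs is zero
  have hsum : ∑ w, (mult w : ℝ) * Real.log (n w) = 0 := by
    have : ∀ w ∈ univ, (n w) ^ mult w ≠ 0 :=
      fun w _ ↦ pow_ne_zero _ (npos w).ne'
    calc ∑ w, (mult w : ℝ) * Real.log (n w)
        = ∑ w, Real.log ((n w) ^ mult w) := by simp [Real.log_pow]
      _ = Real.log (∏ w, (n w) ^ mult w) := (Real.log_prod this).symm
      _ = 0 := by
          rw [← mixedEmbedding.norm_apply, hx1, Real.log_one]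
  -- bound at w₀
  have hw0 : |(mult (w₀ : InfinitePlace F) : ℝ) * Real.log (n w₀)| ≤
      (Fintype.card (InfinitePlace F) : ℝ) * R := by
    have hsplit := Finset.add_sum_erase univ
      (fun w ↦ (mult w : ℝ) * Real.log (n w)) (mem_univ (w₀ : InfinitePlace F))
    rw [hsum] at hsplit
    have heq : (mult (w₀ : InfinitePlace F) : ℝ) * Real.log (n w₀) =
        -∑ w ∈ univ.erase w₀, (mult w : ℝ) * Real.log (n w) := by linarith
    rw [heq, abs_neg]
    calc |∑ w ∈ univ.erase w₀, (mult w : ℝ) * Real.log (n w)|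
        ≤ ∑ w ∈ univ.erase w₀, |(mult w : ℝ) * Real.log (n w)| :=
          Finset.abs_sum_le_sum_abs _ _
      _ ≤ ∑ _w ∈ univ.erase w₀, R :=
          Finset.sum_le_sum fun w hw ↦ hlog w (Finset.ne_of_mem_erase hw)
      _ = ((univ.erase (w₀ : InfinitePlace F)).card : ℝ) * R := by
          rw [Finset.sum_const, nsmul_eq_mul]
      _ ≤ (Fintype.card (InfinitePlace F) : ℝ) * R := by
          gcongr
          exact_mod_cast Finset.card_le_card (Finset.erase_subset _ _)
  -- all log bounds
  have hall : ∀ w, Real.log (n w) ≤ C := by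
    intro w
    have h1 : |Real.log (n w)| ≤ |(mult w : ℝ) * Real.log (n w)| := by
      rw [abs_mul]
      nth_rewrite 1 [← one_mul |Real.log (n w)|]
      gcongr
      rw [abs_of_nonneg (by positivity)]
      exact one_le_mult
    rcases eq_or_ne w w₀ with rfl | hw
    · calc Real.log (n w₀) ≤ |Real.log (n w₀)| := le_abs_self _
        _ ≤ (Fintype.card (InfinitePlace F) : ℝ) * R := h1.trans hw0
        _ ≤ C := by rw [hC]; nlinarith
    · calc Real.log (n w) ≤ |Real.log (n w)| := le_abs_self _
        _ ≤ R := h1.trans (hlog w hw)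
        _ ≤ C := by
            rw [hC]
            nlinarith [Fintype.card_pos_iff.mpr (inferInstance :
              Nonempty (InfinitePlace F)), (Nat.cast_nonneg (Fintype.card (InfinitePlace F)) : (0:ℝ) ≤ _)]
  have hnb : ∀ w, n w ≤ Real.exp C := fun w ↦ by
    rw [← Real.exp_log (npos w)]
    exact Real.exp_le_exp.mpr (hall w)
  rw [norm_eq_sup'_normAtPlace]
  exact Finset.sup'_le _ _ fun w _ ↦ hnb w

end aux

/-- Let `F` be a number field.  There is a compact subset `Λ` of the norm-one
hypersurface `F_∞^1 = {x ∈ F_∞ : ∏_v |x_v|_v = 1}` of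
`F_∞ = ∏_{v | ∞} F_v` (modelled by the mixed space
`({w real} → ℝ) × ({w complex} → ℂ)` with the norm `∏|x_w|·∏‖x_w‖²`) such that
`F_∞^1 = Λ · O_F^×`: every element of `F_∞^1` is the product of an element of
`Λ` and (the image of) a unit of `O_F`. -/
theorem exists_compact_norm_one_fundamental_set
    (F : Type*) [Field F] [NumberField F] :
    ∃ Λ : Set (NumberField.mixedEmbedding.mixedSpace F),
      IsCompact Λ ∧
      Λ ⊆ {x | NumberField.mixedEmbedding.norm x = 1} ∧
      ∀ x : NumberField.mixedEmbedding.mixedSpace F,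
        NumberField.mixedEmbedding.norm x = 1 →
        ∃ l ∈ Λ, ∃ u : (𝓞 F)ˣ,
          x = l * NumberField.mixedEmbedding F (u : 𝓞 F) := by
  classical
  set S : Set (mixedSpace F) :=
    {x : mixedSpace F | x ∈ fundamentalCone F ∧ mixedEmbedding.norm x = 1} with hS
  refine ⟨closure S, ?_, ?_, ?_⟩
  · exact Metric.isCompact_of_isClosed_isBounded isClosed_closure
      isBounded_cone_inter.closure
  · refine closure_minimal (fun x hx ↦ hx.2) ?_
    exact isClosed_eq continuous_mixedNorm continuous_const
  · intro x hx
    obtain ⟨u, hu⟩ := fundamentalCone.exists_unit_smul_mem (x := x) (by rw [hx]; norm_num)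
    have hnorm : mixedEmbedding.norm (u • x) = 1 := by
      rw [unitSMul_smul, map_mul, norm_unit, hx, one_mul]
    refine ⟨u • x, subset_closure ⟨hu, hnorm⟩, u⁻¹, ?_⟩
    have h1 : ((u : 𝓞 F) : F) * ((u⁻¹ : (𝓞 F)ˣ) : 𝓞 F) = 1 := by
      norm_cast
      simp
    rw [unitSMul_smul, mul_comm ((mixedEmbedding F) _) x, mul_assoc, ← map_mul,
      ← RingOfIntegers.coe_eq_algebraMap, h1, map_one, mul_one]
end
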